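/- If k > 1 is odd and n ≢ 2 (mod 4), or if k = 1, then Re(G_k(n)) ≡ 0 (mod n). -/

import Mathlib

/-- The Gaussian power sum `G_k(n) = ∑_{1 ≤ a, b ≤ n} (a + b·i)^k` in `ℤ[i]`. -/
def Gsum (k n : ℕ) : GaussianInt :=
  ∑ a ∈ Finset.Icc 1 n, ∑ b ∈ Finset.Icc 1 n, (⟨(a : ℤ), (b : ℤ)⟩ : GaussianInt) ^ k

namespace GPS

open Finset

local notation "ℤi" => GaussianInt

/-- The imaginary unit. -/
def Ii : GaussianInt := ⟨0, 1⟩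

lemma mk_def (x y : ℤ) : (⟨x, y⟩ : GaussianInt) = (x : GaussianInt) + (y : GaussianInt) * Ii := by
  rw [Zsqrtd.ext_iff]; simp [Ii]

/-- The analogous power sum with indices in `[0, n-1]` instead of `[1, n]`. -/
def Tsum (k n : ℕ) : GaussianInt :=
  ∑ a ∈ range n, ∑ b ∈ range n, (⟨(a : ℤ), (b : ℤ)⟩ : GaussianInt) ^ k

lemma sum_Icc_one (f : ℕ → GaussianInt) (n : ℕ) :
    ∑ a ∈ Icc 1 n, f a = ∑ x ∈ range n, f (x + 1) := by
  induction n with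
  | zero => simp
  | succ n ih => rw [Finset.sum_Icc_succ_top (by omega), ih, sum_range_succ]

lemma icc_range_dvd (d : GaussianInt) (f : ℕ → GaussianInt) (n : ℕ) (h : d ∣ f n - f 0) :
    d ∣ (∑ a ∈ Icc 1 n, f a) - ∑ a ∈ range n, f a := by
  rw [sum_Icc_one, ← sum_sub_distrib, Finset.sum_range_sub]
  exact h

lemma shift_many (d : GaussianInt) (f : ℕ → GaussianInt) (q : ℕ)
    (h : ∀ x, d ∣ f (x + q) - f x) : ∀ (j x : ℕ), d ∣ f (j * q + x) - f x := by
  intro j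
  induction j with
  | zero => simp
  | succ j ih =>
    intro x
    have e : (j + 1) * q + x = j * q + (x + q) := by ring
    rw [e]
    have := dvd_add (ih (x + q)) (h x)
    simpa using this

lemma shift_red (d : GaussianInt) (f : ℕ → GaussianInt) (q : ℕ)
    (h : ∀ x, d ∣ f (x + q) - f x) (m : ℕ) :
    d ∣ (∑ a ∈ range (m * q), f a) - m * ∑ a ∈ range q, f a := by
  induction m with
  | zero => simp
  | succ m ih =>
    rw [show (m + 1) * q = m * q + q from by ring, sum_range_add]
    have h3 : d ∣ (∑ x ∈ range q, f (m * q + x)) - ∑ x ∈ range q, f x := by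
      rw [← sum_sub_distrib]
      exact dvd_sum fun x _ => shift_many d f q h m x
    have := dvd_add ih h3
    convert this using 1
    push_cast
    ring

lemma binom (z c : GaussianInt) : ∀ j : ℕ,
    c ^ 2 ∣ (z + c) ^ (j + 1) - z ^ (j + 1) - ((j : GaussianInt) + 1) * z ^ j * c := by
  intro j
  induction j with
  | zero => refine ⟨0, ?_⟩; push_cast; ring
  | succ j ih =>
    obtain ⟨t, ht⟩ := ih
    refine ⟨(z + c) * t + ((j : GaussianInt) + 1) * z ^ j, ?_⟩
    push_cast
    linear_combination (z + c) * ht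

lemma stepB (j N : ℕ) :
    ((N : GaussianInt) ^ 2) ∣ Tsum (j + 1) (2 * N) - 4 * Tsum (j + 1) N
      - 2 * ((j : GaussianInt) + 1) * (N : GaussianInt) * (1 + Ii) * Tsum j N := by
  have expand : Tsum (j + 1) (2 * N) = ∑ a ∈ range N, ∑ b ∈ range N,
      ((⟨(a : ℤ), (b : ℤ)⟩ : GaussianInt) ^ (j + 1)
        + (⟨((N + a : ℕ) : ℤ), (b : ℤ)⟩ : GaussianInt) ^ (j + 1)
        + (⟨(a : ℤ), ((N + b : ℕ) : ℤ)⟩ : GaussianInt) ^ (j + 1)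
        + (⟨((N + a : ℕ) : ℤ), ((N + b : ℕ) : ℤ)⟩ : GaussianInt) ^ (j + 1)) := by
    unfold Tsum
    rw [two_mul]
    simp only [sum_range_add, sum_add_distrib]
    ring
  have key : ∀ a b : ℕ, ((N : GaussianInt) ^ 2) ∣
      ((⟨(a : ℤ), (b : ℤ)⟩ : GaussianInt) ^ (j + 1)
        + (⟨((N + a : ℕ) : ℤ), (b : ℤ)⟩ : GaussianInt) ^ (j + 1)
        + (⟨(a : ℤ), ((N + b : ℕ) : ℤ)⟩ : GaussianInt) ^ (j + 1)
        + (⟨((N + a : ℕ) : ℤ), ((N + b : ℕ) : ℤ)⟩ : GaussianInt) ^ (j + 1))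
      - 4 * (⟨(a : ℤ), (b : ℤ)⟩ : GaussianInt) ^ (j + 1)
      - 2 * ((j : GaussianInt) + 1) * (N : GaussianInt) * (1 + Ii)
          * (⟨(a : ℤ), (b : ℤ)⟩ : GaussianInt) ^ j := by
    intro a b
    set z : GaussianInt := ⟨(a : ℤ), (b : ℤ)⟩ with hz
    have m1 : (⟨((N + a : ℕ) : ℤ), (b : ℤ)⟩ : GaussianInt) = z + (N : GaussianInt) := by
      rw [hz, mk_def, mk_def]; push_cast; ring
    have m2 : (⟨(a : ℤ), ((N + b : ℕ) : ℤ)⟩ : GaussianInt) = z + (N : GaussianInt) * Ii := by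
      rw [hz, mk_def, mk_def]; push_cast; ring
    have m3 : (⟨((N + a : ℕ) : ℤ), ((N + b : ℕ) : ℤ)⟩ : GaussianInt)
        = z + (N : GaussianInt) * (1 + Ii) := by
      rw [hz, mk_def, mk_def]; push_cast; ring
    rw [m1, m2, m3]
    obtain ⟨t1, e1⟩ := binom z (N : GaussianInt) j
    obtain ⟨t2, e2⟩ := binom z ((N : GaussianInt) * Ii) j
    obtain ⟨t3, e3⟩ := binom z ((N : GaussianInt) * (1 + Ii)) j
    refine ⟨t1 + Ii ^ 2 * t2 + (1 + Ii) ^ 2 * t3, ?_⟩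
    linear_combination e1 + e2 + e3
  rw [expand]
  unfold Tsum
  rw [mul_sum, mul_sum, ← sum_sub_distrib, ← sum_sub_distrib]
  refine dvd_sum fun a _ => ?_
  rw [mul_sum, mul_sum, ← sum_sub_distrib, ← sum_sub_distrib]
  exact dvd_sum fun b _ => key a b

lemma lemB (j : ℕ) : ∀ e : ℕ, 2 ≤ e → ((2 : GaussianInt) ^ e) ∣ Tsum (j + 1) (2 ^ e) := by
  intro e he
  induction e, he using Nat.le_induction with
  | base =>
    have h := stepB j 2
    have c2 : ((2 : ℕ) : GaussianInt) = 2 := by push_cast; ring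
    rw [c2] at h
    obtain ⟨t, ht⟩ := h
    refine ⟨t + Tsum (j + 1) 2 + ((j : GaussianInt) + 1) * (1 + Ii) * Tsum j 2, ?_⟩
    norm_num at ht ⊢
    linear_combination ht
  | succ e he ih =>
    obtain ⟨e', rfl⟩ : ∃ e', e = e' + 2 := ⟨e - 2, by omega⟩
    have h := stepB j (2 ^ (e' + 2))
    have c2 : ((2 ^ (e' + 2) : ℕ) : GaussianInt) = 2 ^ (e' + 2) := by push_cast; ring
    rw [c2] at h
    obtain ⟨t, ht⟩ := h
    obtain ⟨s, hs⟩ := ih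
    refine ⟨2 ^ (e' + 1) * t + 2 * s
      + ((j : GaussianInt) + 1) * (1 + Ii) * Tsum j (2 ^ (e' + 2)), ?_⟩
    rw [show (2 : ℕ) ^ (e' + 2 + 1) = 2 * 2 ^ (e' + 2) from by ring]
    linear_combination ht + 4 * hs

lemma col_dvd (k n : ℕ) (b : ℕ) :
    (n : GaussianInt) ∣ (⟨(n : ℤ), (b : ℤ)⟩ : GaussianInt) ^ k
      - (⟨(0 : ℤ), (b : ℤ)⟩ : GaussianInt) ^ k := by
  have hd := sub_dvd_pow_sub_pow (⟨(n : ℤ), (b : ℤ)⟩ : GaussianInt) ⟨(0 : ℤ), (b : ℤ)⟩ k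
  have e : (⟨(n : ℤ), (b : ℤ)⟩ : GaussianInt) - ⟨(0 : ℤ), (b : ℤ)⟩ = (n : GaussianInt) := by
    rw [mk_def, mk_def]; push_cast; ring
  rwa [e] at hd

lemma step1 (k n : ℕ) : (n : GaussianInt) ∣ Gsum k n - Tsum k n := by
  set F : ℕ → ℤi := fun a => ∑ b ∈ Icc 1 n, (⟨(a : ℤ), (b : ℤ)⟩ : GaussianInt) ^ k with hF
  set F' : ℕ → ℤi := fun a => ∑ b ∈ range n, (⟨(a : ℤ), (b : ℤ)⟩ : GaussianInt) ^ k with hF'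
  have hinner : ∀ a : ℕ, (n : GaussianInt) ∣ F a - F' a := by
    intro a
    refine icc_range_dvd _ (fun b => (⟨(a : ℤ), (b : ℤ)⟩ : GaussianInt) ^ k) n ?_
    have hd := sub_dvd_pow_sub_pow (⟨(a : ℤ), (n : ℤ)⟩ : GaussianInt) ⟨(a : ℤ), (0 : ℤ)⟩ k
    have e : (⟨(a : ℤ), (n : ℤ)⟩ : GaussianInt) - ⟨(a : ℤ), (0 : ℤ)⟩ = (n : GaussianInt) * Ii := by
      rw [mk_def, mk_def]; push_cast; ring
    rw [e] at hd
    exact dvd_trans (Dvd.intro Ii rfl) hd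
  have houter : (n : GaussianInt) ∣ (∑ a ∈ Icc 1 n, F' a) - ∑ a ∈ range n, F' a := by
    refine icc_range_dvd _ F' n ?_
    rw [hF']
    simp only
    rw [← sum_sub_distrib]
    exact dvd_sum fun b _ => col_dvd k n b
  have e : Gsum k n - Tsum k n
      = (∑ a ∈ Icc 1 n, (F a - F' a)) + ((∑ a ∈ Icc 1 n, F' a) - ∑ a ∈ range n, F' a) := by
    rw [sum_sub_distrib]
    unfold Gsum Tsum
    ring
  rw [e]
  exact dvd_add (dvd_sum fun a _ => hinner a) houter

lemma step2 (k n : ℕ) (hk : Odd k) : (n : ℤ) ∣ 2 * (Gsum k n).re := by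
  set F : ℕ → ℤi := fun a => ∑ b ∈ Icc 1 n, (⟨(a : ℤ), (b : ℤ)⟩ : GaussianInt) ^ k with hF
  have hG : Gsum k n = ∑ a ∈ Icc 1 n, F a := rfl
  have hrefl : Gsum k n = ∑ x ∈ range n, F (n - x) := by
    rw [hG, sum_Icc_one, ← Finset.sum_range_reflect (fun x => F (x + 1)) n]
    refine sum_congr rfl fun x hx => ?_
    have := mem_range.mp hx
    congr 1
    omega
  have hpair : ∀ x ∈ range n, (n : GaussianInt) ∣ F (n - x) + star (F x) := by
    intro x hx
    have hx' := mem_range.mp hx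
    rw [hF]
    simp only
    rw [star_sum, ← sum_add_distrib]
    refine dvd_sum fun b _ => ?_
    set w : ℤi := star (⟨(x : ℤ), (b : ℤ)⟩ : GaussianInt) with hw
    have hwv : w = ⟨(x : ℤ), -(b : ℤ)⟩ := Zsqrtd.star_mk _ _
    have e1 : (⟨((n - x : ℕ) : ℤ), (b : ℤ)⟩ : GaussianInt) = (n : GaussianInt) - w := by
      rw [hwv, mk_def, mk_def]
      have : ((n - x : ℕ) : ℤ) = (n : ℤ) - (x : ℤ) := by omega
      rw [this]; push_cast; ring
    rw [star_pow, e1]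
    have hd := sub_dvd_pow_sub_pow ((n : GaussianInt) - w) (-w) k
    have e2 : (n : GaussianInt) - w - -w = (n : GaussianInt) := by ring
    rw [e2, hk.neg_pow, sub_neg_eq_add] at hd
    exact hd
  have h1 : (n : GaussianInt) ∣ Gsum k n + star (∑ x ∈ range n, F x) := by
    rw [hrefl, star_sum, ← sum_add_distrib]
    exact dvd_sum hpair
  have h2 : (n : GaussianInt) ∣ Gsum k n - ∑ x ∈ range n, F x := by
    rw [hG]
    refine icc_range_dvd _ F n ?_
    rw [hF]
    simp only
    rw [← sum_sub_distrib]
    exact dvd_sum fun b _ => col_dvd k n b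
  have h3 : (n : GaussianInt) ∣ star (Gsum k n) - star (∑ x ∈ range n, F x) := by
    obtain ⟨w, hw⟩ := h2
    refine ⟨star w, ?_⟩
    rw [← star_sub, hw, star_mul', star_natCast]
  have h4 : (n : GaussianInt) ∣ Gsum k n + star (Gsum k n) := by
    have := dvd_add h1 h3
    convert this using 1
    ring
  have h5 : (n : ℤ) ∣ (Gsum k n + star (Gsum k n)).re := by
    have hcast : ((n : ℤ) : ℤi) = (n : GaussianInt) := by push_cast; ring
    rw [← hcast] at h4
    exact ((Zsqrtd.intCast_dvd _ _).mp h4).1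
  have : (Gsum k n + star (Gsum k n)).re = 2 * (Gsum k n).re := by
    rw [Zsqrtd.re_add, Zsqrtd.re_star]; ring
  rwa [this] at h5

lemma row_shift (k q b : ℕ) : ∀ x : ℕ,
    (q : GaussianInt) ∣ (⟨((x + q : ℕ) : ℤ), (b : ℤ)⟩ : GaussianInt) ^ k
      - (⟨(x : ℤ), (b : ℤ)⟩ : GaussianInt) ^ k := by
  intro x
  have hd := sub_dvd_pow_sub_pow (⟨((x + q : ℕ) : ℤ), (b : ℤ)⟩ : GaussianInt)
    ⟨(x : ℤ), (b : ℤ)⟩ k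
  have e : (⟨((x + q : ℕ) : ℤ), (b : ℤ)⟩ : GaussianInt) - ⟨(x : ℤ), (b : ℤ)⟩
      = (q : GaussianInt) := by
    rw [mk_def, mk_def]; push_cast; ring
  rwa [e] at hd

lemma col_shift (k q a : ℕ) : ∀ x : ℕ,
    (q : GaussianInt) ∣ (⟨(a : ℤ), ((x + q : ℕ) : ℤ)⟩ : GaussianInt) ^ k
      - (⟨(a : ℤ), (x : ℤ)⟩ : GaussianInt) ^ k := by
  intro x
  have hd := sub_dvd_pow_sub_pow (⟨(a : ℤ), ((x + q : ℕ) : ℤ)⟩ : GaussianInt)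
    ⟨(a : ℤ), (x : ℤ)⟩ k
  have e : (⟨(a : ℤ), ((x + q : ℕ) : ℤ)⟩ : GaussianInt) - ⟨(a : ℤ), (x : ℤ)⟩
      = (q : GaussianInt) * Ii := by
    rw [mk_def, mk_def]; push_cast; ring
  rw [e] at hd
  exact dvd_trans (Dvd.intro Ii rfl) hd

lemma tsum_red (k q m : ℕ) :
    (q : GaussianInt) ∣ Tsum k (m * q) - (m : GaussianInt) ^ 2 * Tsum k q := by
  set F : ℕ → ℤi := fun a => ∑ b ∈ range (m * q), (⟨(a : ℤ), (b : ℤ)⟩ : GaussianInt) ^ k with hF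
  have red1 : (q : ℤi) ∣ Tsum k (m * q) - m * ∑ a ∈ range q, F a := by
    refine shift_red (q : ℤi) F q (fun x => ?_) m
    rw [hF]
    simp only
    rw [← sum_sub_distrib]
    exact dvd_sum fun b _ => row_shift k q b x
  have red2 : ∀ a : ℕ, (q : ℤi) ∣ F a - m * ∑ b ∈ range q, (⟨(a : ℤ), (b : ℤ)⟩ : GaussianInt) ^ k := by
    intro a
    exact shift_red (q : ℤi) (fun b => (⟨(a : ℤ), (b : ℤ)⟩ : GaussianInt) ^ k) q
      (fun x => col_shift k q a x) m
  have red3 : (q : ℤi) ∣ (∑ a ∈ range q, F a) - m * Tsum k q := by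
    unfold Tsum
    rw [mul_sum, ← sum_sub_distrib]
    refine dvd_sum fun a _ => ?_
    exact red2 a
  obtain ⟨t1, e1⟩ := red1
  obtain ⟨t2, e2⟩ := red3
  refine ⟨t1 + m * t2, ?_⟩
  linear_combination e1 + (m : ℤi) * e2

/-- The 2-part: if `2^e ∣ n` with `e ≥ 2`, then `2^e ∣ Tsum k n` in `ℤ[i]`. -/
lemma two_part (j n e m : ℕ) (hnm : n = m * 2 ^ e) (he : 2 ≤ e) :
    ((2 : GaussianInt) ^ e) ∣ Tsum (j + 1) n := by
  have h1 := tsum_red (j + 1) (2 ^ e) m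
  rw [← hnm] at h1
  have hcast : ((2 ^ e : ℕ) : GaussianInt) = (2 : GaussianInt) ^ e := by push_cast; ring
  rw [hcast] at h1
  obtain ⟨t1, e1⟩ := h1
  obtain ⟨t2, e2⟩ := lemB j e he
  exact ⟨t1 + (m : ℤi) ^ 2 * t2, by linear_combination e1 + (m : ℤi) ^ 2 * e2⟩

/-- Bundled real part as an additive homomorphism. -/
def reHom : GaussianInt →+ ℤ where
  toFun := Zsqrtd.re
  map_zero' := rfl
  map_add' := fun _ _ => rfl

end GPS

open GPS Finset in
theorem re_Gsum_odd_k (k n : ℕ) (hn : 0 < n)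
    (h : (Odd k ∧ 1 < k ∧ n % 4 ≠ 2) ∨ k = 1) :
    (n : ℤ) ∣ (Gsum k n).re := by
  -- the case k = 1
  rcases h with ⟨hodd, -, h4⟩ | rfl
  · -- k odd, n % 4 ≠ 2
    have h2re := step2 k n hodd
    rcases Nat.even_or_odd n with hev | hod
    · -- n even, hence 4 ∣ n
      have hn2 : n % 2 = 0 := Nat.even_iff.mp hev
      have h4n : 4 ∣ n := by omega
      -- decompose n = m * 2^e with m odd
      set e := n.factorization 2 with he
      set m := n / 2 ^ e with hm
      have hnm : 2 ^ e * m = n := Nat.ordProj_mul_ordCompl_eq_self n 2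
      have hmodd : ¬ 2 ∣ m := Nat.not_dvd_ordCompl Nat.prime_two hn.ne'
      have he2 : 2 ≤ e := by
        refine (Nat.Prime.pow_dvd_iff_le_factorization Nat.prime_two hn.ne').mp ?_
        simpa using h4n
      obtain ⟨j, rfl⟩ : ∃ j, k = j + 1 := ⟨k - 1, by obtain ⟨c, hc⟩ := hodd; omega⟩
      -- 2^e divides the real part
      have hT : ((2 : GaussianInt) ^ e) ∣ Tsum (j + 1) n := two_part j n e m (by rw [← hnm]; ring) he2
      have hGT := step1 (j + 1) n
      have hqn : ((2 : GaussianInt) ^ e) ∣ (n : GaussianInt) := by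
        have : (2 : ℕ) ^ e ∣ n := ⟨m, hnm.symm⟩
        have h' : ((2 ^ e : ℕ) : GaussianInt) ∣ (n : GaussianInt) := Nat.cast_dvd_cast this
        rwa [show ((2 ^ e : ℕ) : GaussianInt) = (2 : GaussianInt) ^ e from by push_cast; ring] at h'
      have hG2 : ((2 : GaussianInt) ^ e) ∣ Gsum (j + 1) n := by
        have := dvd_add (dvd_trans hqn hGT) hT
        simpa using this
      have hre2 : ((2 : ℤ) ^ e) ∣ (Gsum (j + 1) n).re := by
        have hcast : (((2 : ℤ) ^ e : ℤ) : GaussianInt) = (2 : GaussianInt) ^ e := by push_cast; ring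
        rw [← hcast] at hG2
        exact ((Zsqrtd.intCast_dvd _ _).mp hG2).1
      -- m divides the real part
      have hcopm2 : IsCoprime (m : ℤ) (2 : ℤ) := by
        have hc := ((Nat.prime_two.coprime_iff_not_dvd).mpr hmodd).symm
        exact_mod_cast Nat.isCoprime_iff_coprime.mpr hc
      have hrem : (m : ℤ) ∣ (Gsum (j + 1) n).re := by
        have hmn : (m : ℤ) ∣ (n : ℤ) := Int.natCast_dvd_natCast.mpr (Dvd.intro_left _ hnm)
        exact hcopm2.dvd_of_dvd_mul_left (dvd_trans hmn h2re)
      -- combine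
      have hcop : IsCoprime ((2 : ℤ) ^ e) (m : ℤ) := (hcopm2.symm).pow_left
      have := hcop.mul_dvd hre2 hrem
      rwa [show ((2 : ℤ) ^ e) * (m : ℤ) = (n : ℤ) from by
        rw [← hnm]; push_cast; ring] at this
    · -- n odd
      have hcop : IsCoprime ((n : ℤ)) (2 : ℤ) := by
        have hnd : ¬ (2 ∣ n) := by
          have := Nat.odd_iff.mp hod
          omega
        have hc := ((Nat.prime_two.coprime_iff_not_dvd).mpr hnd).symm
        exact_mod_cast Nat.isCoprime_iff_coprime.mpr hc
      exact hcop.dvd_of_dvd_mul_left h2re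
  · -- k = 1
    have hre : (Gsum 1 n).re = ∑ a ∈ Icc 1 n, ∑ b ∈ Icc 1 n, (a : ℤ) := by
      have h0 : (Gsum 1 n).re = reHom (Gsum 1 n) := rfl
      rw [h0]
      unfold Gsum
      rw [map_sum]
      refine sum_congr rfl fun a _ => ?_
      rw [map_sum]
      refine sum_congr rfl fun b _ => ?_
      simp [pow_one, reHom]; rfl
    rw [hre]
    refine dvd_sum fun a _ => ?_
    rw [sum_const, Nat.card_Icc]
    simp only [Nat.add_sub_cancel, nsmul_eq_mul]
    exact Dvd.intro _ rfl
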